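/- The number of cubefull numbers up to x is O(x^{1/3}): there is a constant C such that #{n ≤ x : for every prime p dividing n, p³ divides n} ≤ C·x^{1/3} for all x ≥ 1. -/

import Mathlib

open Finset

private def qa (e : ℕ) : ℕ :=
  if e % 3 = 0 then e / 3 else if e % 3 = 1 then (e - 4) / 3 else (e - 5) / 3
private def qb (e : ℕ) : ℕ := if e % 3 = 1 then 1 else 0
private def qc (e : ℕ) : ℕ := if e % 3 = 2 then 1 else 0

private lemma key (e : ℕ) (he : 3 ≤ e) : qa e * 3 + qb e * 4 + qc e * 5 = e := by
  unfold qa qb qc; split_ifs <;> omega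

private lemma rep {n : ℕ} (hn : 0 < n)
    (h : ∀ p : ℕ, p.Prime → p ∣ n → p ^ 3 ∣ n) :
    ∃ t : ℕ × ℕ × ℕ, 0 < t.1 ∧ 0 < t.2.1 ∧ 0 < t.2.2 ∧
      t.1 ^ 3 * t.2.1 ^ 4 * t.2.2 ^ 5 = n := by
  classical
  set f := n.factorization with hf
  have hsupp : ∀ p ∈ f.support, p.Prime ∧ 3 ≤ f p := by
    intro p hp
    have hp' : p ∈ n.primeFactors := by rwa [← Nat.support_factorization]
    have hprime := Nat.prime_of_mem_primeFactors hp'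
    have hdvd := Nat.dvd_of_mem_primeFactors hp'
    refine ⟨hprime, ?_⟩
    rw [hf, ← Nat.Prime.pow_dvd_iff_le_factorization hprime hn.ne']
    exact h p hprime hdvd
  refine ⟨⟨∏ p ∈ f.support, p ^ qa (f p), ∏ p ∈ f.support, p ^ qb (f p),
      ∏ p ∈ f.support, p ^ qc (f p)⟩, ?_, ?_, ?_, ?_⟩
  · exact Finset.prod_pos fun p hp => pow_pos (hsupp p hp).1.pos _
  · exact Finset.prod_pos fun p hp => pow_pos (hsupp p hp).1.pos _
  · exact Finset.prod_pos fun p hp => pow_pos (hsupp p hp).1.pos _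
  · simp only
    rw [← Finset.prod_pow, ← Finset.prod_pow, ← Finset.prod_pow,
      ← Finset.prod_mul_distrib, ← Finset.prod_mul_distrib]
    have : ∀ p ∈ f.support,
        (p ^ qa (f p)) ^ 3 * (p ^ qb (f p)) ^ 4 * (p ^ qc (f p)) ^ 5 = p ^ f p := by
      intro p hp
      rw [← pow_mul, ← pow_mul, ← pow_mul, ← pow_add, ← pow_add,
        key (f p) (hsupp p hp).2]
    rw [Finset.prod_congr rfl this]
    exact Nat.factorization_prod_pow_eq_self hn.ne'

/-- The number of cubefull numbers up to `x` is `O(x^(1/3))`. -/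
theorem stmt_5 :
    ∃ C : ℝ, ∀ x : ℝ, 1 ≤ x →
      (({n : ℕ | 1 ≤ n ∧ (n : ℝ) ≤ x ∧
          ∀ p : ℕ, p.Prime → p ∣ n → p ^ 3 ∣ n}.ncard : ℝ)) ≤ C * x ^ ((1 : ℝ) / 3) := by
  classical
  have hsum1 : Summable (fun b : ℕ => 1 / (b : ℝ) ^ ((4 : ℝ) / 3)) :=
    Real.summable_one_div_nat_rpow.mpr (by norm_num)
  have hsum2 : Summable (fun c : ℕ => 1 / (c : ℝ) ^ ((5 : ℝ) / 3)) :=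
    Real.summable_one_div_nat_rpow.mpr (by norm_num)
  set K1 : ℝ := ∑' b : ℕ, 1 / (b : ℝ) ^ ((4 : ℝ) / 3) with hK1
  set K2 : ℝ := ∑' c : ℕ, 1 / (c : ℝ) ^ ((5 : ℝ) / 3) with hK2
  refine ⟨K1 * K2, ?_⟩
  intro x hx
  set S : Set ℕ := {n : ℕ | 1 ≤ n ∧ (n : ℝ) ≤ x ∧
      ∀ p : ℕ, p.Prime → p ∣ n → p ^ 3 ∣ n} with hS
  set N : ℕ := ⌊x⌋₊ with hN
  have hxpos : (0 : ℝ) < x := lt_of_lt_of_le one_pos hx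
  have hNx : (N : ℝ) ≤ x := Nat.floor_le hxpos.le
  -- choice function
  set f : ℕ → ℕ × ℕ × ℕ := fun n =>
    if h : 0 < n ∧ ∀ p : ℕ, p.Prime → p ∣ n → p ^ 3 ∣ n then (rep h.1 h.2).choose
    else (1, 1, 1) with hfdef
  have hfspec : ∀ n ∈ S, 0 < (f n).1 ∧ 0 < (f n).2.1 ∧ 0 < (f n).2.2 ∧
      (f n).1 ^ 3 * (f n).2.1 ^ 4 * (f n).2.2 ^ 5 = n := by
    intro n hn
    obtain ⟨h1, _, h3⟩ := hn
    have h : 0 < n ∧ ∀ p : ℕ, p.Prime → p ∣ n → p ^ 3 ∣ n := ⟨h1, h3⟩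
    simp only [hfdef, dif_pos h]
    exact (rep h.1 h.2).choose_spec
  -- target finset
  set T : Finset (ℕ × ℕ × ℕ) :=
    (Finset.Icc 1 N ×ˢ Finset.Icc 1 N ×ˢ Finset.Icc 1 N).filter
      (fun t => t.1 ^ 3 * t.2.1 ^ 4 * t.2.2 ^ 5 ≤ N) with hT
  have himg : ∀ n ∈ S, f n ∈ T := by
    intro n hn
    obtain ⟨ha, hb, hc, heq⟩ := hfspec n hn
    obtain ⟨h1, h2, _⟩ := hn
    have hnN : n ≤ N := Nat.le_floor h2
    have hprodN : (f n).1 ^ 3 * (f n).2.1 ^ 4 * (f n).2.2 ^ 5 ≤ N := by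
      rw [heq]; exact hnN
    have hnpos : 0 < n := h1
    have hd1 : (f n).1 ^ 3 ∣ n := by
      conv_rhs => rw [← heq]
      exact (dvd_mul_right _ _).mul_right _
    have hd2 : (f n).2.1 ^ 4 ∣ n := by
      conv_rhs => rw [← heq]
      exact (dvd_mul_left _ _).mul_right _
    have hd3 : (f n).2.2 ^ 5 ∣ n := by
      conv_rhs => rw [← heq]
      exact dvd_mul_left _ _
    have haN : (f n).1 ≤ N :=
      le_trans (le_trans (Nat.le_self_pow (by norm_num) _) (Nat.le_of_dvd hnpos hd1)) hnN
    have hbN : (f n).2.1 ≤ N :=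
      le_trans (le_trans (Nat.le_self_pow (by norm_num) _) (Nat.le_of_dvd hnpos hd2)) hnN
    have hcN : (f n).2.2 ≤ N :=
      le_trans (le_trans (Nat.le_self_pow (by norm_num) _) (Nat.le_of_dvd hnpos hd3)) hnN
    simp only [hT, Finset.mem_filter, Finset.mem_product, Finset.mem_Icc]
    exact ⟨⟨⟨ha, haN⟩, ⟨hb, hbN⟩, ⟨hc, hcN⟩⟩, hprodN⟩
  -- S is finite and injects into T
  have hinj : Set.InjOn f S := by
    intro n hn m hm hfe
    obtain ⟨_, _, _, hn4⟩ := hfspec n hn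
    obtain ⟨_, _, _, hm4⟩ := hfspec m hm
    have : (f n).1 ^ 3 * (f n).2.1 ^ 4 * (f n).2.2 ^ 5
        = (f m).1 ^ 3 * (f m).2.1 ^ 4 * (f m).2.2 ^ 5 := by rw [hfe]
    exact hn4.symm.trans (this.trans hm4)
  have hsub : f '' S ⊆ ↑T := by
    rintro _ ⟨n, hn, rfl⟩; exact himg n hn
  have hcard1 : (S.ncard : ℝ) ≤ (T.card : ℝ) := by
    have h1 : S.ncard = (f '' S).ncard := (Set.ncard_image_of_injOn hinj).symm
    have h2 : (f '' S).ncard ≤ T.card := by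
      rw [← Set.ncard_coe_finset]
      exact Set.ncard_le_ncard hsub T.finite_toSet
    exact_mod_cast h1 ▸ Nat.cast_le.mpr h2
  -- fiberwise counting
  have hfib : T.card = ∑ q ∈ Finset.Icc 1 N ×ˢ Finset.Icc 1 N,
      (T.filter (fun t => t.2 = q)).card := by
    apply Finset.card_eq_sum_card_fiberwise
    intro t ht
    simp only [hT, Finset.mem_coe, Finset.mem_filter, Finset.mem_product, Finset.mem_Icc] at ht
    simp only [Finset.mem_coe, Finset.mem_product, Finset.mem_Icc]
    exact ⟨ht.1.2.1, ht.1.2.2⟩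
  -- bound each fiber
  have hfibbd : ∀ q ∈ Finset.Icc 1 N ×ˢ Finset.Icc 1 N,
      ((T.filter (fun t => t.2 = q)).card : ℝ) ≤
        x ^ ((1:ℝ)/3) * (1 / (q.1 : ℝ) ^ ((4:ℝ)/3)) * (1 / (q.2 : ℝ) ^ ((5:ℝ)/3)) := by
    intro q hq
    simp only [Finset.mem_product, Finset.mem_Icc] at hq
    have hq1 : (0:ℝ) < (q.1 : ℝ) := by exact_mod_cast hq.1.1
    have hq2 : (0:ℝ) < (q.2 : ℝ) := by exact_mod_cast hq.2.1
    set A : ℕ := ⌊(x / ((q.1 : ℝ) ^ 4 * (q.2 : ℝ) ^ 5)) ^ ((1:ℝ)/3)⌋₊ with hA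
    have hden : (0:ℝ) < (q.1 : ℝ) ^ 4 * (q.2 : ℝ) ^ 5 := by positivity
    have step1 : (T.filter (fun t => t.2 = q)).card ≤ (Finset.Icc 1 A).card := by
      apply Finset.card_le_card_of_injOn (fun t => t.1)
      · intro t ht
        rw [Finset.mem_coe, Finset.mem_filter] at ht
        obtain ⟨htT, hteq⟩ := ht
        simp only [hT, Finset.mem_filter, Finset.mem_product, Finset.mem_Icc] at htT
        obtain ⟨⟨⟨ht1, _⟩, _, _⟩, hle⟩ := htT
        have e1 : t.2.1 = q.1 := by rw [hteq]
        have e2 : t.2.2 = q.2 := by rw [hteq]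
        rw [e1, e2] at hle
        have hle' : ((t.1 ^ 3 * q.1 ^ 4 * q.2 ^ 5 : ℕ) : ℝ) ≤ x :=
          le_trans (Nat.cast_le.mpr hle) hNx
        push_cast at hle'
        have hcube : ((t.1 : ℝ)) ^ 3 ≤ x / ((q.1 : ℝ) ^ 4 * (q.2 : ℝ) ^ 5) := by
          rw [le_div_iff₀ hden]; nlinarith [hle']
        have htnn : (0:ℝ) ≤ (t.1 : ℝ) := Nat.cast_nonneg _
        have h13 : ((t.1 : ℝ)) ≤ (x / ((q.1 : ℝ) ^ 4 * (q.2 : ℝ) ^ 5)) ^ ((1:ℝ)/3) := by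
          have := Real.rpow_le_rpow (by positivity) hcube (by norm_num : (0:ℝ) ≤ 1/3)
          rwa [← Real.rpow_natCast (t.1 : ℝ) 3, ← Real.rpow_mul htnn,
            (by norm_num : ((3:ℕ):ℝ) * (1/3) = 1), Real.rpow_one] at this
        simp only [Finset.mem_coe, Finset.mem_Icc]
        exact ⟨ht1, Nat.le_floor h13⟩
      · intro t ht u hu htu
        simp only [Finset.mem_coe, Finset.mem_filter] at ht hu
        exact Prod.ext htu (ht.2.trans hu.2.symm)
    have step2 : ((Finset.Icc 1 A).card : ℝ) ≤
        x ^ ((1:ℝ)/3) * (1 / (q.1 : ℝ) ^ ((4:ℝ)/3)) * (1 / (q.2 : ℝ) ^ ((5:ℝ)/3)) := by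
      rw [Nat.card_Icc]
      have hAle : (A : ℝ) ≤ (x / ((q.1 : ℝ) ^ 4 * (q.2 : ℝ) ^ 5)) ^ ((1:ℝ)/3) :=
        Nat.floor_le (by positivity)
      have hrw : (x / ((q.1 : ℝ) ^ 4 * (q.2 : ℝ) ^ 5)) ^ ((1:ℝ)/3) =
          x ^ ((1:ℝ)/3) * (1 / (q.1 : ℝ) ^ ((4:ℝ)/3)) * (1 / (q.2 : ℝ) ^ ((5:ℝ)/3)) := by
        rw [Real.div_rpow hxpos.le hden.le,
          Real.mul_rpow (by positivity) (by positivity),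
          ← Real.rpow_natCast (q.1 : ℝ) 4, ← Real.rpow_natCast (q.2 : ℝ) 5,
          ← Real.rpow_mul hq1.le, ← Real.rpow_mul hq2.le]
        norm_num
        ring
      have : ((A + 1 - 1 : ℕ) : ℝ) ≤ (A : ℝ) := by push_cast; norm_num
      exact this.trans (hAle.trans_eq hrw)
    exact le_trans (Nat.cast_le.mpr step1) step2
  -- sum the bound
  have hsumbd : ((T.card : ℝ)) ≤ x ^ ((1:ℝ)/3) * K1 * K2 := by
    rw [hfib]
    push_cast
    calc (∑ q ∈ Finset.Icc 1 N ×ˢ Finset.Icc 1 N,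
          ((T.filter (fun t => t.2 = q)).card : ℝ))
        ≤ ∑ q ∈ Finset.Icc 1 N ×ˢ Finset.Icc 1 N,
            x ^ ((1:ℝ)/3) * (1 / (q.1 : ℝ) ^ ((4:ℝ)/3)) * (1 / (q.2 : ℝ) ^ ((5:ℝ)/3)) :=
          Finset.sum_le_sum hfibbd
      _ = x ^ ((1:ℝ)/3) * ((∑ b ∈ Finset.Icc 1 N, 1 / (b : ℝ) ^ ((4:ℝ)/3)) *
            (∑ c ∈ Finset.Icc 1 N, 1 / (c : ℝ) ^ ((5:ℝ)/3))) := by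
          rw [Finset.sum_product, Finset.sum_mul_sum, Finset.mul_sum]
          refine Finset.sum_congr rfl fun b _ => ?_
          rw [Finset.mul_sum]
          refine Finset.sum_congr rfl fun c _ => ?_
          ring
      _ ≤ x ^ ((1:ℝ)/3) * (K1 * K2) := by
          apply mul_le_mul_of_nonneg_left _ (by positivity)
          have hb1 : (∑ b ∈ Finset.Icc 1 N, 1 / (b : ℝ) ^ ((4:ℝ)/3)) ≤ K1 :=
            hsum1.sum_le_tsum _ (fun i _ => by positivity)
          have hb2 : (∑ c ∈ Finset.Icc 1 N, 1 / (c : ℝ) ^ ((5:ℝ)/3)) ≤ K2 :=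
            hsum2.sum_le_tsum _ (fun i _ => by positivity)
          have hnn1 : (0:ℝ) ≤ ∑ b ∈ Finset.Icc 1 N, 1 / (b : ℝ) ^ ((4:ℝ)/3) := by positivity
          have hnn2 : (0:ℝ) ≤ ∑ c ∈ Finset.Icc 1 N, 1 / (c : ℝ) ^ ((5:ℝ)/3) := by positivity
          have hK2nn : (0:ℝ) ≤ K2 := hnn2.trans hb2
          exact mul_le_mul hb1 hb2 hnn2 (hnn1.trans hb1)
      _ = x ^ ((1:ℝ)/3) * K1 * K2 := by ring
  calc (S.ncard : ℝ) ≤ (T.card : ℝ) := hcard1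
    _ ≤ x ^ ((1:ℝ)/3) * K1 * K2 := hsumbd
    _ = K1 * K2 * x ^ ((1:ℝ)/3) := by ring
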